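/- There exists a constant C > 0 such that for every real b with 0 < |b| < 1/2 and every real E ≥ 2, |N_b(E) − E/(4|b|) − (E/2)·log E| ≤ C·E, where N_b(E) = #{(n,k) ∈ ℕ×ℤ : 4n|k−b| ≤ E}. In particular, for fixed non-integer flux b (with nearest integer 0) the eigenvalue counting function grows like (E/2)log E + E/(4|b|), and the coefficient of E blows up as b approaches the integer 0. -/

import Mathlib

open Real Finset

private lemma Hs_le (n : ℕ) : ∑ i ∈ Finset.range n, (1:ℝ)/((i:ℝ)+1) ≤ 1 + Real.log n := by
  have h := harmonic_le_one_add_log n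
  have he : ((harmonic n : ℚ) : ℝ) = ∑ i ∈ Finset.range n, (1:ℝ)/((i:ℝ)+1) := by
    rw [harmonic]; push_cast; simp [one_div]
  linarith [he ▸ h]

private lemma le_Hs (n : ℕ) : Real.log ((n:ℝ)+1) ≤ ∑ i ∈ Finset.range n, (1:ℝ)/((i:ℝ)+1) := by
  have h := log_add_one_le_harmonic n
  have he : ((harmonic n : ℚ) : ℝ) = ∑ i ∈ Finset.range n, (1:ℝ)/((i:ℝ)+1) := by
    rw [harmonic]; push_cast; simp [one_div]
  push_cast at h
  linarith [he ▸ h]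

private lemma sum_Icc_neg_split {α : Type*} [AddCommMonoid α] (M : ℕ) (f : ℤ → α) :
    ∑ k ∈ Finset.Icc (-(M:ℤ)) (M:ℤ), f k
      = f 0 + ∑ j ∈ Finset.Icc 1 M, (f (j:ℤ) + f (-(j:ℤ))) := by
  induction M with
  | zero => simp
  | succ m ih =>
    have h1 : Finset.Icc (-((m+1:ℕ):ℤ)) ((m+1:ℕ):ℤ)
        = insert (-((m:ℤ)+1)) (insert ((m:ℤ)+1) (Finset.Icc (-(m:ℤ)) (m:ℤ))) := by
      ext k
      simp only [Finset.mem_Icc, Finset.mem_insert]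
      push_cast
      omega
    rw [h1, Finset.sum_insert, Finset.sum_insert, ih,
        Finset.sum_Icc_succ_top (by omega : 1 ≤ m + 1)]
    · push_cast
      abel
    · simp only [Finset.mem_Icc]; omega
    · simp only [Finset.mem_insert, Finset.mem_Icc]; omega

private lemma sumA (M : ℕ) (hM : 2 ≤ M) :
    ∑ j ∈ Finset.Icc 1 M, (1:ℝ)/((j:ℝ)-1/2) ≤ 3 + Real.log M := by
  obtain ⟨m, hm⟩ : ∃ m, M = m + 1 := ⟨M - 1, by omega⟩
  subst hm
  rw [← Finset.Ico_add_one_right_eq_Icc, Finset.sum_Ico_eq_sum_range, Nat.add_sub_cancel,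
    Finset.sum_range_succ']
  have hm1 : 1 ≤ m := by omega
  have hstep : ∀ i ∈ Finset.range m, (1:ℝ)/((↑(1+(i+1)):ℝ)-1/2) ≤ 1/((i:ℝ)+1) := by
    intro i _
    apply one_div_le_one_div_of_le (by positivity)
    push_cast
    linarith
  have h0 : (1:ℝ)/(((1+0:ℕ):ℝ)-1/2) = 2 := by norm_num
  have hlog : Real.log (m:ℝ) ≤ Real.log ((m:ℝ)+1) := by
    apply Real.log_le_log (by exact_mod_cast hm1)
    linarith
  have hH := Hs_le m
  have hsum := Finset.sum_le_sum hstep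
  have hc : ((m+1:ℕ):ℝ) = (m:ℝ)+1 := by push_cast; ring
  rw [hc]
  linarith [h0]

private lemma sumB (M : ℕ) :
    Real.log ((M:ℝ)+2) - 1 ≤ ∑ j ∈ Finset.Icc 1 M, (1:ℝ)/((j:ℝ)+1/2) := by
  rw [← Finset.Ico_add_one_right_eq_Icc, Finset.sum_Ico_eq_sum_range, Nat.add_sub_cancel]
  have h1 : ∀ i ∈ Finset.range M, (1:ℝ)/((i:ℝ)+2) ≤ 1/((↑(1+i):ℝ)+1/2) := by
    intro i _
    apply one_div_le_one_div_of_le (by positivity)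
    push_cast
    linarith
  have h3 : ∑ i ∈ Finset.range (M+1), (1:ℝ)/((i:ℝ)+1)
      = ∑ i ∈ Finset.range M, (1:ℝ)/((i:ℝ)+2) + 1 := by
    rw [Finset.sum_range_succ']
    norm_num
    apply Finset.sum_congr rfl
    intro i _
    ring_nf
  have h4 := le_Hs (M+1)
  push_cast at h4
  rw [h3] at h4
  have h6 : Real.log ((M:ℝ)+2) - 1 ≤ ∑ i ∈ Finset.range M, (1:ℝ)/((i:ℝ)+2) := by
    have : (M:ℝ)+1+1 = (M:ℝ)+2 := by ring
    rw [this] at h4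
    linarith
  exact le_trans h6 (Finset.sum_le_sum h1)

set_option maxHeartbeats 2000000 in
theorem grushin_cylinder_ab_weyl_law :
    ∃ C : ℝ, 0 < C ∧ ∀ b : ℝ, 0 < |b| → |b| < 1 / 2 → ∀ E : ℝ, 2 ≤ E →
      |(Set.ncard {p : ℕ × ℤ | 0 < p.1 ∧ (4 * p.1 * |(p.2 : ℝ) - b| ≤ E)} : ℝ)
        - E / (4 * |b|) - E / 2 * Real.log E| ≤ C * E := by
  refine ⟨12, by norm_num, ?_⟩
  intro b hb0 hb E hE
  have hE0 : (0:ℝ) < E := by linarith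
  obtain ⟨hbl, hbr⟩ := abs_lt.mp hb
  set M : ℕ := ⌈E⌉₊ with hMdef
  have hME : E ≤ (M:ℝ) := Nat.le_ceil E
  have hM1 : (M:ℝ) ≤ E + 1 := le_of_lt (Nat.ceil_lt_add_one (by linarith))
  have hM2 : 2 ≤ M := by exact_mod_cast le_trans hE hME
  have hkb : ∀ k : ℤ, |b| ≤ |(k:ℝ) - b| := by
    intro k
    rcases eq_or_ne k 0 with rfl | hk
    · simp
    · have h1 : (1:ℝ) ≤ |(k:ℝ)| := by exact_mod_cast Int.one_le_abs (by omega)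
      have h2 := abs_sub_abs_le_abs_sub (k:ℝ) b
      linarith
  have hkbpos : ∀ k : ℤ, 0 < |(k:ℝ) - b| := fun k => lt_of_lt_of_le hb0 (hkb k)
  set x : ℤ → ℝ := fun k => E / (4 * |(k:ℝ) - b|) with hxdef
  have hx0 : ∀ k, 0 ≤ x k := fun k => div_nonneg hE0.le (by positivity)
  set P : ℤ → ℕ := fun k => ⌊x k⌋₊ with hPdef
  set T : Finset (ℕ × ℤ) := (Finset.Icc (-(M:ℤ)) (M:ℤ)).biUnion
      (fun k => (Finset.Icc 1 (P k)).image (fun n => (n, k))) with hTdef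
  have hset : {p : ℕ × ℤ | 0 < p.1 ∧ (4 * p.1 * |(p.2 : ℝ) - b| ≤ E)} = ↑T := by
    ext ⟨n, k⟩
    simp only [Set.mem_setOf_eq, hTdef, Finset.coe_biUnion, Set.mem_iUnion,
      Finset.mem_coe, Finset.mem_image, Finset.mem_Icc, Prod.mk.injEq]
    constructor
    · rintro ⟨hn, hle⟩
      have hn1 : (1:ℝ) ≤ (n:ℝ) := by exact_mod_cast hn
      have habs : |(k:ℝ) - b| ≤ E / 4 := by
        rw [le_div_iff₀ (by norm_num : (0:ℝ) < 4)]
        nlinarith [abs_nonneg ((k:ℝ) - b)]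
      have hkabs : |(k:ℝ)| ≤ (M:ℝ) := by
        have := abs_add_le ((k:ℝ) - b) b
        simp only [sub_add_cancel] at this
        linarith
      have hkM : |k| ≤ (M:ℤ) := by
        have h : ((|k| : ℤ) : ℝ) ≤ (M:ℝ) := by rw [Int.cast_abs]; exact hkabs
        exact_mod_cast h
      obtain ⟨hkl, hkr⟩ := abs_le.mp hkM
      refine ⟨k, ⟨hkl, hkr⟩, n, ⟨hn, ?_⟩, rfl, rfl⟩
      apply Nat.le_floor
      rw [le_div_iff₀ (mul_pos (by norm_num) (hkbpos k))]
      nlinarith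
    · rintro ⟨k', ⟨_, _⟩, n', ⟨hn1, hnP⟩, rfl, rfl⟩
      refine ⟨hn1, ?_⟩
      have h1 : ((n':ℕ):ℝ) ≤ x k' := le_trans (by exact_mod_cast hnP) (Nat.floor_le (hx0 k'))
      rw [hxdef, le_div_iff₀ (mul_pos (by norm_num) (hkbpos k'))] at h1
      nlinarith
  have hTcard : T.card = ∑ k ∈ Finset.Icc (-(M:ℤ)) (M:ℤ), P k := by
    rw [hTdef, Finset.card_biUnion]
    · refine Finset.sum_congr rfl fun k _ => ?_
      rw [Finset.card_image_of_injective _ (fun a a' h => (Prod.mk.injEq _ _ _ _ ▸ h).1),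
        Nat.card_Icc]
      omega
    · intro a _ c _ hac
      simp only [Finset.disjoint_left, Finset.mem_image, Finset.mem_Icc]
      rintro p ⟨n, _, rfl⟩ ⟨n', _, h⟩
      exact hac ((Prod.mk.injEq _ _ _ _ ▸ h).2.symm ▸ rfl)
  have hNcard : (Set.ncard {p : ℕ × ℤ | 0 < p.1 ∧ (4 * p.1 * |(p.2 : ℝ) - b| ≤ E)} : ℝ)
      = ∑ k ∈ Finset.Icc (-(M:ℤ)) (M:ℤ), (P k : ℝ) := by
    rw [hset, Set.ncard_coe_finset, hTcard]
    push_cast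
    rfl
  -- estimates
  set S : ℝ := ∑ k ∈ Finset.Icc (-(M:ℤ)) (M:ℤ), x k with hSdef
  have hup : ∑ k ∈ Finset.Icc (-(M:ℤ)) (M:ℤ), (P k : ℝ) ≤ S :=
    Finset.sum_le_sum fun k _ => Nat.floor_le (hx0 k)
  have hcardIcc : (Finset.Icc (-(M:ℤ)) (M:ℤ)).card = 2 * M + 1 := by
    rw [Int.card_Icc]
    omega
  have hlow : S - (2 * (M:ℝ) + 1) ≤ ∑ k ∈ Finset.Icc (-(M:ℤ)) (M:ℤ), (P k : ℝ) := by
    have h2 : S - (2 * (M:ℝ) + 1) = ∑ k ∈ Finset.Icc (-(M:ℤ)) (M:ℤ), (x k - 1) := by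
      rw [Finset.sum_sub_distrib, Finset.sum_const, hcardIcc]
      ring
    rw [h2]
    refine Finset.sum_le_sum fun k _ => ?_
    have := Nat.lt_floor_add_one (x k)
    have hPk : (P k : ℝ) = (⌊x k⌋₊ : ℝ) := rfl
    rw [hPk]
    linarith
  have hsplit : S = x 0 + ∑ j ∈ Finset.Icc 1 M, (x (j:ℤ) + x (-(j:ℤ))) := sum_Icc_neg_split M x
  have hx0val : x 0 = E / (4 * |b|) := by
    simp [hxdef]
  -- pointwise bounds on |±j - b|
  have habs_bounds : ∀ j : ℕ, 1 ≤ j →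
      ((j:ℝ) - 1/2 ≤ |(j:ℝ) - b| ∧ |(j:ℝ) - b| ≤ (j:ℝ) + 1/2 ∧
       (j:ℝ) - 1/2 ≤ |(-(j:ℝ)) - b| ∧ |(-(j:ℝ)) - b| ≤ (j:ℝ) + 1/2) := by
    intro j hj
    have hj1 : (1:ℝ) ≤ (j:ℝ) := by exact_mod_cast hj
    have h1 : |(j:ℝ) - b| = (j:ℝ) - b := abs_of_pos (by linarith)
    have h2 : |(-(j:ℝ)) - b| = (j:ℝ) + b := by
      rw [abs_of_neg (by linarith)]; ring
    rw [h1, h2]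
    refine ⟨by linarith, by linarith, by linarith, by linarith⟩
  have htail_up : ∀ j ∈ Finset.Icc 1 M, x (j:ℤ) + x (-(j:ℤ)) ≤ E / (2 * ((j:ℝ) - 1/2)) := by
    intro j hj
    obtain ⟨hj1, _⟩ := Finset.mem_Icc.mp hj
    have hj1' : (1:ℝ) ≤ (j:ℝ) := by exact_mod_cast hj1
    have hpos : (0:ℝ) < (j:ℝ) - 1/2 := by linarith
    obtain ⟨hb1, _, hb3, _⟩ := habs_bounds j hj1
    have hden : (0:ℝ) < 4 * ((j:ℝ) - 1/2) := by linarith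
    have hle1 : 4 * ((j:ℝ) - 1/2) ≤ 4 * |(j:ℝ) - b| := by linarith
    have hle2 : 4 * ((j:ℝ) - 1/2) ≤ 4 * |(-(j:ℝ)) - b| := by linarith
    have h1 : x (j:ℤ) ≤ E / (4 * ((j:ℝ) - 1/2)) := by
      simp only [hxdef]
      push_cast
      exact div_le_div_of_nonneg_left hE0.le hden hle1
    have h2 : x (-(j:ℤ)) ≤ E / (4 * ((j:ℝ) - 1/2)) := by
      simp only [hxdef]
      push_cast
      exact div_le_div_of_nonneg_left hE0.le hden hle2

    have h4 : (0:ℝ) < 4 * ((j:ℝ) - 1/2) := by linarith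
    have h2' : (0:ℝ) < 2 * ((j:ℝ) - 1/2) := by linarith
    have heq : E / (4 * ((j:ℝ) - 1/2)) + E / (4 * ((j:ℝ) - 1/2)) = E / (2 * ((j:ℝ) - 1/2)) := by
      rw [← add_div, div_eq_div_iff h4.ne' h2'.ne']
      ring
    linarith
  have htail_low : ∀ j ∈ Finset.Icc 1 M, E / (2 * ((j:ℝ) + 1/2)) ≤ x (j:ℤ) + x (-(j:ℤ)) := by
    intro j hj
    obtain ⟨hj1, _⟩ := Finset.mem_Icc.mp hj
    have hj1' : (1:ℝ) ≤ (j:ℝ) := by exact_mod_cast hj1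
    have hpos : (0:ℝ) < (j:ℝ) + 1/2 := by linarith
    obtain ⟨_, hb2, _, hb4⟩ := habs_bounds j hj1
    have hd1 : (0:ℝ) < 4 * |(j:ℝ) - b| := by
      have := hkbpos (j:ℤ)
      push_cast at this
      linarith
    have hd2 : (0:ℝ) < 4 * |(-(j:ℝ)) - b| := by
      have := hkbpos (-(j:ℤ))
      push_cast at this
      linarith
    have hle1 : 4 * |(j:ℝ) - b| ≤ 4 * ((j:ℝ) + 1/2) := by linarith
    have hle2 : 4 * |(-(j:ℝ)) - b| ≤ 4 * ((j:ℝ) + 1/2) := by linarith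
    have h1 : E / (4 * ((j:ℝ) + 1/2)) ≤ x (j:ℤ) := by
      simp only [hxdef]
      push_cast
      exact div_le_div_of_nonneg_left hE0.le hd1 hle1
    have h2 : E / (4 * ((j:ℝ) + 1/2)) ≤ x (-(j:ℤ)) := by
      simp only [hxdef]
      push_cast
      exact div_le_div_of_nonneg_left hE0.le hd2 hle2
    have h4 : (0:ℝ) < 4 * ((j:ℝ) + 1/2) := by linarith
    have h2' : (0:ℝ) < 2 * ((j:ℝ) + 1/2) := by linarith
    have heq : E / (4 * ((j:ℝ) + 1/2)) + E / (4 * ((j:ℝ) + 1/2)) = E / (2 * ((j:ℝ) + 1/2)) := by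
      rw [← add_div, div_eq_div_iff h4.ne' h2'.ne']
      ring
    linarith
  have hlogM : Real.log (M:ℝ) ≤ 1 + Real.log E := by
    have h1 : Real.log (M:ℝ) ≤ Real.log (2 * E) := by
      apply Real.log_le_log (by positivity)
      linarith
    rw [Real.log_mul (by norm_num) hE0.ne'] at h1
    have h2 : Real.log 2 ≤ 1 := by
      have := Real.log_le_sub_one_of_pos (by norm_num : (0:ℝ) < 2)
      linarith
    linarith
  have hsum1 : ∑ j ∈ Finset.Icc 1 M, (1:ℝ) / ((j:ℝ) - 1/2) ≤ 4 + Real.log E := by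
    have := sumA M hM2
    linarith
  have hsum2 : Real.log E - 1 ≤ ∑ j ∈ Finset.Icc 1 M, (1:ℝ) / ((j:ℝ) + 1/2) := by
    have h := sumB M
    have h5 : Real.log E ≤ Real.log ((M:ℝ) + 2) := by
      apply Real.log_le_log hE0
      linarith
    linarith
  have htail1 : ∑ j ∈ Finset.Icc 1 M, (x (j:ℤ) + x (-(j:ℤ))) ≤ E/2 * (4 + Real.log E) := by
    calc ∑ j ∈ Finset.Icc 1 M, (x (j:ℤ) + x (-(j:ℤ)))
        ≤ ∑ j ∈ Finset.Icc 1 M, E / (2 * ((j:ℝ) - 1/2)) := Finset.sum_le_sum htail_up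
      _ = E/2 * ∑ j ∈ Finset.Icc 1 M, (1:ℝ) / ((j:ℝ) - 1/2) := by
          rw [Finset.mul_sum]
          refine Finset.sum_congr rfl fun j _ => ?_
          rw [mul_one_div, div_div]
      _ ≤ E/2 * (4 + Real.log E) := by
          apply mul_le_mul_of_nonneg_left hsum1 (by positivity)
  have htail2 : E/2 * (Real.log E - 1) ≤ ∑ j ∈ Finset.Icc 1 M, (x (j:ℤ) + x (-(j:ℤ))) := by
    calc E/2 * (Real.log E - 1) ≤ E/2 * ∑ j ∈ Finset.Icc 1 M, (1:ℝ) / ((j:ℝ) + 1/2) := by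
          apply mul_le_mul_of_nonneg_left hsum2 (by positivity)
      _ = ∑ j ∈ Finset.Icc 1 M, E / (2 * ((j:ℝ) + 1/2)) := by
          rw [Finset.mul_sum]
          refine Finset.sum_congr rfl fun j _ => ?_
          rw [mul_one_div, div_div]
      _ ≤ _ := Finset.sum_le_sum htail_low
  rw [hNcard, abs_le]
  have e1 : E/2 * (4 + Real.log E) = 2 * E + E/2 * Real.log E := by ring
  have e2 : E/2 * (Real.log E - 1) = E/2 * Real.log E - E/2 := by ring
  constructor
  · linarith
  · linarith
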